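/- In the fixed-design linear-predictor setting of Theorem 2 (y : Ω → ℝ^n square-integrable with covariance matrix Σ; H a deterministic zero-diagonal n×n matrix; y_tr : Ω → ℝ^{n−1}, y_te : Ω → ℝ square-integrable; h_te ∈ ℝ^{n−1} deterministic; and for every k: E y_k = E y_te, Var(y_k) = Var(y_te), E[(Hy)_k] = E[h_te · y_tr], Var((Hy)_k) = Var(h_te · y_tr)), if additionally Cov((y_tr)_j, y_te) = 0 for every j (the test response is uncorrelated with the training responses), then w_cv = (2/n) tr(H Σ); equivalently, the corrected estimator CV_c = (1/n)‖y − H y‖² + (2/n) tr(H Σ) satisfies E[CV_c] = E[(y_te − h_te · y_tr)²], i.e. CV_c is an unbiased estimator of the generalization error. (Paper's Eq. (10).) -/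

import Mathlib

open MeasureTheory

/-- Variance `E[(U - E U)^2]` of a real random variable. -/
noncomputable def eVar {Ω : Type*} [MeasurableSpace Ω] (μ : Measure Ω) (U : Ω → ℝ) : ℝ :=
  ∫ ω, (U ω - ∫ ω', U ω' ∂μ) ^ 2 ∂μ

/-- Covariance `E[(U - E U)(V - E V)]` of two real random variables. -/
noncomputable def eCov {Ω : Type*} [MeasurableSpace Ω] (μ : Measure Ω) (U V : Ω → ℝ) : ℝ :=
  ∫ ω, (U ω - ∫ ω', U ω' ∂μ) * (V ω - ∫ ω', V ω' ∂μ) ∂μ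

section Aux

variable {Ω : Type*} [MeasurableSpace Ω] {μ : Measure Ω}

lemma memL2_mul_integrable {f g : Ω → ℝ} (hf : MemLp f 2 μ) (hg : MemLp g 2 μ) :
    Integrable (fun ω => f ω * g ω) μ := by
  have h := ((hf.add hg).integrable_sq.sub hf.integrable_sq).sub hg.integrable_sq
  have : (fun ω => f ω * g ω)
      = fun ω => (((f ω + g ω) ^ 2 - f ω ^ 2) - g ω ^ 2) / 2 := by
    funext ω; ring
  rw [this]
  exact h.div_const 2

lemma eCov_comm (U V : Ω → ℝ) : eCov μ U V = eCov μ V U := by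
  simp only [eCov]; congr 1; funext ω; ring

lemma memL2_wsum {ι : Type*} [Fintype ι] (c : ι → ℝ) {f : ι → Ω → ℝ}
    (hf : ∀ j, MemLp (f j) 2 μ) :
    MemLp (fun ω => ∑ j, c j * f j ω) 2 μ := by
  have h := memLp_finset_sum' (μ := μ) (p := 2) Finset.univ
    (fun j (_ : j ∈ Finset.univ) => (hf j).const_mul (c j))
  have he : (∑ i : ι, fun x => c i * f i x) = fun ω => ∑ j, c j * f j ω := by
    funext ω; simp
  rwa [he] at h

lemma eCov_wsum_right [IsProbabilityMeasure μ] {ι : Type*} [Fintype ι]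
    {U : Ω → ℝ} (hU : MemLp U 2 μ) (c : ι → ℝ) {f : ι → Ω → ℝ}
    (hf : ∀ j, MemLp (f j) 2 μ) :
    eCov μ U (fun ω => ∑ j, c j * f j ω) = ∑ j, c j * eCov μ U (f j) := by
  have hint : ∀ j : ι, Integrable (fun ω => c j * f j ω) μ :=
    fun j => ((hf j).integrable one_le_two).const_mul (c j)
  have hm : ∫ ω, (∑ j, c j * f j ω) ∂μ = ∑ j, c j * ∫ ω, f j ω ∂μ := by
    rw [integral_finset_sum _ fun j _ => hint j]
    simp [integral_const_mul]
  simp only [eCov, hm]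
  have key : ∀ ω, (U ω - ∫ ω', U ω' ∂μ) * ((∑ j, c j * f j ω) - ∑ j, c j * ∫ ω', f j ω' ∂μ)
      = ∑ j, c j * ((U ω - ∫ ω', U ω' ∂μ) * (f j ω - ∫ ω', f j ω' ∂μ)) := by
    intro ω
    rw [← Finset.sum_sub_distrib, Finset.mul_sum]
    congr 1; funext j; ring
  simp_rw [key]
  have hj : ∀ j : ι, Integrable
      (fun ω => c j * ((U ω - ∫ ω', U ω' ∂μ) * (f j ω - ∫ ω', f j ω' ∂μ))) μ := fun j => by
    exact (memL2_mul_integrable (hU.sub (memLp_const _))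
      ((hf j).sub (memLp_const _))).const_mul (c j)
  rw [integral_finset_sum _ fun j _ => hj j]
  simp [integral_const_mul]

lemma sq_diff_expand [IsProbabilityMeasure μ] {U V : Ω → ℝ}
    (hU : MemLp U 2 μ) (hV : MemLp V 2 μ) :
    ∫ ω, (U ω - V ω) ^ 2 ∂μ
      = eVar μ U + eVar μ V - 2 * eCov μ U V
        + ((∫ ω, U ω ∂μ) - ∫ ω, V ω ∂μ) ^ 2 := by
  set a := ∫ ω, U ω ∂μ with ha
  set b := ∫ ω, V ω ∂μ with hb
  have hUa : MemLp (fun ω => U ω - a) 2 μ := hU.sub (memLp_const a)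
  have hVb : MemLp (fun ω => V ω - b) 2 μ := hV.sub (memLp_const b)
  have i1 : Integrable (fun ω => (U ω - a) ^ 2) μ := hUa.integrable_sq
  have i2 : Integrable (fun ω => (V ω - b) ^ 2) μ := hVb.integrable_sq
  have i3 : Integrable (fun ω => 2 * ((U ω - a) * (V ω - b))) μ :=
    (memL2_mul_integrable hUa hVb).const_mul 2
  have i4 : Integrable (fun ω => (2 * (a - b)) * (U ω - a)) μ :=
    (hUa.integrable one_le_two).const_mul _
  have i5 : Integrable (fun ω => (2 * (a - b)) * (V ω - b)) μ :=
    (hVb.integrable one_le_two).const_mul _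
  have hz1 : ∫ ω, (U ω - a) ∂μ = 0 := by
    rw [integral_sub (hU.integrable one_le_two) (integrable_const a), integral_const]
    simp [ha]
  have hz2 : ∫ ω, (V ω - b) ∂μ = 0 := by
    rw [integral_sub (hV.integrable one_le_two) (integrable_const b), integral_const]
    simp [hb]
  have key : (fun ω => (U ω - V ω) ^ 2)
      = fun ω => ((U ω - a) ^ 2 + (V ω - b) ^ 2 - 2 * ((U ω - a) * (V ω - b)))
        + ((2 * (a - b)) * (U ω - a) - (2 * (a - b)) * (V ω - b) + (a - b) ^ 2) := by
    funext ω; ring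
  have hA1 : Integrable (fun ω => (U ω - a) ^ 2 + (V ω - b) ^ 2) μ := by exact i1.add i2
  have hA : Integrable
      (fun ω => (U ω - a) ^ 2 + (V ω - b) ^ 2 - 2 * ((U ω - a) * (V ω - b))) μ := by
    exact hA1.sub i3
  have hB1 : Integrable (fun ω => 2 * (a - b) * (U ω - a) - 2 * (a - b) * (V ω - b)) μ := by
    exact i4.sub i5
  have hB : Integrable
      (fun ω => 2 * (a - b) * (U ω - a) - 2 * (a - b) * (V ω - b) + (a - b) ^ 2) μ := by
    exact hB1.add (integrable_const _)
  rw [key, integral_add hA hB, integral_sub hA1 i3, integral_add i1 i2,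
    integral_add hB1 (integrable_const _), integral_sub i4 i5,
    integral_const_mul, integral_const_mul, integral_const_mul, integral_const,
    hz1, hz2]
  simp only [eVar, eCov, ← ha, ← hb]
  simp

end Aux

/-- **Paper's Eq. (10).** In the fixed-design linear-predictor setting of Theorem 2, if the
test response is uncorrelated with the training responses, then the CV bias equals
`(2/n) tr(H Σ)`; equivalently, the corrected estimator
`CV_c = (1/n)‖y − H y‖² + (2/n) tr(H Σ)` is an unbiased estimator of the generalization
error. -/
theorem cv_corrected_unbiased_uncorrelated_test
    {Ω : Type*} [MeasurableSpace Ω] (μ : Measure Ω) [IsProbabilityMeasure μ]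
    (n : ℕ) (hn : 0 < n)
    (y : Fin n → Ω → ℝ) (hy : ∀ k, MemLp (y k) 2 μ)
    (H : Matrix (Fin n) (Fin n) ℝ) (hHdiag : ∀ k, H k k = 0)
    (ytr : Fin (n - 1) → Ω → ℝ) (hytr : ∀ j, MemLp (ytr j) 2 μ)
    (yte : Ω → ℝ) (hyte : MemLp yte 2 μ)
    (hte : Fin (n - 1) → ℝ)
    (Sig : Matrix (Fin n) (Fin n) ℝ)
    (hSig : ∀ i j, Sig i j = eCov μ (y i) (y j))
    (hmean : ∀ k, ∫ ω, y k ω ∂μ = ∫ ω, yte ω ∂μ)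
    (hvar : ∀ k, eVar μ (y k) = eVar μ yte)
    (hmeanH : ∀ k, ∫ ω, (∑ j, H k j * y j ω) ∂μ = ∫ ω, (∑ j, hte j * ytr j ω) ∂μ)
    (hvarH : ∀ k, eVar μ (fun ω => ∑ j, H k j * y j ω)
        = eVar μ (fun ω => ∑ j, hte j * ytr j ω))
    (hc : ∀ j, eCov μ (ytr j) yte = 0) :
    ((∫ ω, (yte ω - ∑ j, hte j * ytr j ω) ^ 2 ∂μ)
        - (1 / (n : ℝ)) * ∫ ω, ∑ k, (y k ω - ∑ j, H k j * y j ω) ^ 2 ∂μ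
      = (2 / (n : ℝ)) * Matrix.trace (H * Sig)) ∧
    ((1 / (n : ℝ)) * (∫ ω, ∑ k, (y k ω - ∑ j, H k j * y j ω) ^ 2 ∂μ)
        + (2 / (n : ℝ)) * Matrix.trace (H * Sig)
      = ∫ ω, (yte ω - ∑ j, hte j * ytr j ω) ^ 2 ∂μ) := by
  have hs : MemLp (fun ω => ∑ j, hte j * ytr j ω) 2 μ := memL2_wsum hte hytr
  have hF : ∀ k, MemLp (fun ω => ∑ j, H k j * y j ω) 2 μ :=
    fun k => memL2_wsum (H k) hy
  -- test term
  have covTest : eCov μ yte (fun ω => ∑ j, hte j * ytr j ω) = 0 := by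
    rw [eCov_wsum_right hyte hte hytr]
    refine Finset.sum_eq_zero fun j _ => ?_
    rw [eCov_comm, hc j, mul_zero]
  set T : ℝ := ∫ ω, (yte ω - ∑ j, hte j * ytr j ω) ^ 2 ∂μ with hT
  have hTest : T = eVar μ yte + eVar μ (fun ω => ∑ j, hte j * ytr j ω)
      + ((∫ ω, yte ω ∂μ) - ∫ ω, (∑ j, hte j * ytr j ω) ∂μ) ^ 2 := by
    rw [hT, sq_diff_expand hyte hs, covTest]; ring
  -- per-index terms
  have covK : ∀ k, eCov μ (y k) (fun ω => ∑ j, H k j * y j ω) = (H * Sig) k k := by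
    intro k
    rw [eCov_wsum_right (hy k) (H k) hy, Matrix.mul_apply]
    refine Finset.sum_congr rfl fun j _ => ?_
    rw [hSig, eCov_comm]
  have hK : ∀ k, ∫ ω, (y k ω - ∑ j, H k j * y j ω) ^ 2 ∂μ = T - 2 * (H * Sig) k k := by
    intro k
    rw [sq_diff_expand (hy k) (hF k), covK k, hvar k, hvarH k, hmean k, hmeanH k, hTest]
    ring
  have hsum : ∫ ω, ∑ k, (y k ω - ∑ j, H k j * y j ω) ^ 2 ∂μ
      = (n : ℝ) * T - 2 * Matrix.trace (H * Sig) := by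
    have hint : ∀ k, Integrable (fun ω => (y k ω - ∑ j, H k j * y j ω) ^ 2) μ := fun k => by
      exact ((hy k).sub (hF k)).integrable_sq
    rw [integral_finset_sum _ fun k _ => hint k]
    simp_rw [hK]
    rw [Finset.sum_sub_distrib, Finset.sum_const, ← Finset.mul_sum]
    simp [Matrix.trace, Matrix.diag, mul_comm]
  have hn' : (n : ℝ) ≠ 0 := Nat.cast_ne_zero.mpr hn.ne'
  constructor <;> rw [hsum] <;> field_simp <;> ring
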